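/- Let (X,d) be a good discrete hyperbolic space, and let ε, β > 0 be as in the path-sum lower bound (Proposition 2.6). Then for every chain c = ∑ c(e)·ē with ∂c = δ_y − δ_x, one has ∑_{e/∼} |c(e)|·e^{−ε·d(e, géod(x,y))} ≥ β·d(x,y), where d(e, géod(x,y)) = min(d(e⁻, géod(x,y)), d(e⁺, géod(x,y))). -/

import Mathlib

/-- The set of points on geodesics from `x` to `y` in a graph. -/
def geodSet {V : Type*} (Γ : SimpleGraph V) (x y : V) : Set V :=
  {z : V | Γ.dist x z + Γ.dist z y = Γ.dist x y}

/-- The distance from `z` to the set `géod(x,y)`. -/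
noncomputable def dGeod {V : Type*} (Γ : SimpleGraph V) (x y z : V) : ℕ :=
  sInf ((fun w => Γ.dist z w) '' geodSet Γ x y)

/-- The boundary of an antisymmetric chain: `∂c(v) = ∑_u c(u,v)`. -/
noncomputable def bnd {V : Type*} (c : (V × V) →₀ ℝ) : V →₀ ℝ :=
  c.sum fun e a => Finsupp.single e.2 a


lemma exists_fn_chain {V : Type*} {r : V → V → Prop} {x y : V}
    (h : Relation.ReflTransGen r x y) :
    ∃ n : ℕ, ∃ p : ℕ → V, p 0 = x ∧ p n = y ∧ ∀ i < n, r (p i) (p (i+1)) := by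
  induction h with
  | refl => exact ⟨0, fun _ => x, rfl, rfl, fun i hi => absurd hi (Nat.not_lt_zero i)⟩
  | @tail b z hab hbz ih =>
    obtain ⟨n, p, h0, hn, hc⟩ := ih
    refine ⟨n + 1, fun k => if k ≤ n then p k else z, ?_, ?_, ?_⟩
    · simp [h0]
    · simp
    · intro i hi
      rcases Nat.lt_or_ge i n with h | h
      · have h1 : i ≤ n := h.le
        have h2 : i + 1 ≤ n := h
        simp only [h1, h2, if_pos]
        exact hc i h
      · have : i = n := by omega
        subst this
        simp only [le_refl, if_pos, Nat.lt_irrefl]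
        rw [if_neg (by omega)]
        rw [hn]; exact hbz

lemma exists_inj_chain {V : Type*} {r : V → V → Prop} {x y : V}
    (h : Relation.ReflTransGen r x y) :
    ∃ n : ℕ, ∃ p : ℕ → V, p 0 = x ∧ p n = y ∧ (∀ i < n, r (p i) (p (i+1))) ∧
      ∀ i ≤ n, ∀ j ≤ n, p i = p j → i = j := by
  obtain ⟨n, p, h0, hn, hc⟩ := exists_fn_chain h
  clear h
  induction n using Nat.strong_induction_on generalizing p with
  | _ n ih =>
  by_cases hdup : ∃ i, ∃ j, i < j ∧ j ≤ n ∧ p i = p j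
  · obtain ⟨i, j, hij, hjn, hpij⟩ := hdup
    rcases eq_or_lt_of_le hjn with hj | hj
    · subst hj
      exact ih i (lt_of_lt_of_le hij le_rfl) p h0 (hpij ▸ hn)
        (fun k hk => hc k (lt_trans hk hij))
    · -- splice
      refine ih (n - (j - i)) (by omega) (fun k => if k ≤ i then p k else p (k + (j - i))) ?_ ?_ ?_
      · simp [h0]
      · beta_reduce
        rw [if_neg (by omega)]
        have h2 : n - (j - i) + (j - i) = n := by omega
        rw [h2, hn]
      · intro k hk
        beta_reduce
        rcases Nat.lt_or_ge k i with h | h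
        · rw [if_pos h.le, if_pos (by omega)]
          exact hc k (by omega)
        · rcases Nat.eq_or_lt_of_le h with h' | h'
          · rw [← h']
            rw [if_pos le_rfl, if_neg (by omega)]
            have h2 : i + 1 + (j - i) = j + 1 := by omega
            rw [h2, hpij]
            exact hc j (by omega)
          · rw [if_neg (by omega), if_neg (by omega)]
            have h3 : k + 1 + (j - i) = k + (j - i) + 1 := by omega
            rw [h3]
            exact hc (k + (j - i)) (by omega)
  · refine ⟨n, p, h0, hn, hc, ?_⟩
    intro i hi j hj hpij
    by_contra hne
    rcases lt_or_gt_of_ne hne with h | h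
    exacts [hdup ⟨i, j, h, hj, hpij⟩, hdup ⟨j, i, h, hi, hpij.symm⟩]



lemma bnd_eq_mapDomain {V : Type*} (c : (V × V) →₀ ℝ) :
    bnd c = Finsupp.mapDomain Prod.snd c := rfl

lemma bnd_sub {V : Type*} (c₁ c₂ : (V × V) →₀ ℝ) :
    bnd (c₁ - c₂) = bnd c₁ - bnd c₂ := by
  simp only [bnd_eq_mapDomain]
  exact map_sub (Finsupp.mapDomain.addMonoidHom Prod.snd) c₁ c₂

lemma bnd_smul {V : Type*} (s : ℝ) (c : (V × V) →₀ ℝ) :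
    bnd (s • c) = s • bnd c := by
  simp only [bnd_eq_mapDomain]
  exact Finsupp.mapDomain_smul s c

lemma bnd_single {V : Type*} (u v : V) (a : ℝ) :
    bnd (Finsupp.single (u, v) a) = Finsupp.single v a := by
  rw [bnd_eq_mapDomain, Finsupp.mapDomain_single]

lemma bnd_finset_sum {V : Type*} {ι : Type*} (s : Finset ι) (f : ι → ((V × V) →₀ ℝ)) :
    bnd (∑ i ∈ s, f i) = ∑ i ∈ s, bnd (f i) := by
  simp only [bnd_eq_mapDomain]
  exact map_sum (Finsupp.mapDomain.addMonoidHom Prod.snd) f s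


lemma reach_of_bnd {V : Type*} (c : (V × V) →₀ ℝ)
    (hanti : ∀ u v : V, c (u, v) = -c (v, u)) {x y : V} {t : ℝ} (ht : 0 < t)
    (hbnd : bnd c = t • (Finsupp.single y 1 - Finsupp.single x 1)) :
    Relation.ReflTransGen (fun u v => 0 < c (u, v)) x y := by
  classical
  by_contra hy
  set r : V → V → Prop := fun u v => 0 < c (u, v) with hr
  set T : Finset V := insert x ((c.support.image Prod.snd).filter
      (fun v => Relation.ReflTransGen r x v)) with hT
  have hmem : ∀ v, v ∈ T ↔ Relation.ReflTransGen r x v := by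
    intro v
    simp only [hT, Finset.mem_insert, Finset.mem_filter, Finset.mem_image]
    constructor
    · rintro (rfl | ⟨_, h⟩)
      · exact Relation.ReflTransGen.refl
      · exact h
    · intro h
      rcases h.cases_tail with h' | ⟨u, _, huv⟩
      · exact Or.inl h'
      · refine Or.inr ⟨⟨(u, v), ?_, rfl⟩, h⟩
        exact Finsupp.mem_support_iff.2 (ne_of_gt huv)
  have hxT : x ∈ T := (hmem x).2 Relation.ReflTransGen.refl
  have hyT : y ∉ T := fun h => hy ((hmem y).1 h)
  -- side A
  have hA : ∑ v ∈ T, bnd c v = -t := by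
    rw [hbnd]
    have h0 : ∀ v, (t • (Finsupp.single y (1:ℝ) - Finsupp.single x (1:ℝ))) v
        = t * ((Finsupp.single y (1:ℝ)) v - (Finsupp.single x (1:ℝ)) v) := by
      intro v
      rw [Finsupp.smul_apply, Finsupp.sub_apply, smul_eq_mul]
    simp only [h0]
    rw [← Finset.mul_sum, Finset.sum_sub_distrib]
    have h1 : ∑ v ∈ T, (Finsupp.single y (1:ℝ)) v = 0 := by
      apply Finset.sum_eq_zero
      intro v hv
      rw [Finsupp.single_apply, if_neg]
      rintro rfl
      exact hyT hv
    have h2 : ∑ v ∈ T, (Finsupp.single x (1:ℝ)) v = 1 := by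
      simp only [Finsupp.single_apply]
      rw [Finset.sum_ite_eq T x (fun _ => (1:ℝ)), if_pos hxT]
    rw [h1, h2]; ring
  -- side B
  have hB : ∑ v ∈ T, bnd c v = ∑ e ∈ c.support.filter (fun e => e.2 ∈ T), c e := by
    have : ∀ v, bnd c v = ∑ e ∈ c.support, (Finsupp.single e.2 (c e)) v := by
      intro v
      rw [bnd, Finsupp.sum_apply]
      rfl
    simp only [this]
    rw [Finset.sum_comm]
    rw [Finset.sum_filter]
    apply Finset.sum_congr rfl
    intro e _
    simp only [Finsupp.single_apply]
    rw [Finset.sum_ite_eq T e.2 (fun _ => c e)]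
  -- split
  have hsplit : ∑ e ∈ c.support.filter (fun e => e.2 ∈ T), c e =
      (∑ e ∈ (c.support.filter (fun e => e.2 ∈ T)).filter (fun e => e.1 ∈ T), c e) +
      ∑ e ∈ (c.support.filter (fun e => e.2 ∈ T)).filter (fun e => ¬ e.1 ∈ T), c e :=
    (Finset.sum_filter_add_sum_filter_not _ _ _).symm
  have hzero : ∑ e ∈ (c.support.filter (fun e => e.2 ∈ T)).filter (fun e => e.1 ∈ T), c e = 0 := by
    apply Finset.sum_involution (fun e _ => (e.2, e.1))
    · rintro ⟨u, v⟩ _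
      have := hanti u v
      linarith
    · rintro ⟨u, v⟩ _ hne h
      apply hne
      have h12 : u = v := congrArg Prod.snd h
      subst h12
      have := hanti u u
      linarith
    · rintro ⟨u, v⟩ he
      simp only [Finset.mem_filter, Finsupp.mem_support_iff] at he ⊢
      refine ⟨⟨?_, he.2⟩, he.1.2⟩
      have := hanti u v
      intro h
      exact he.1.1 (by linarith)
    · rintro ⟨u, v⟩ _
      rfl
  have hnonneg : 0 ≤ ∑ e ∈ (c.support.filter (fun e => e.2 ∈ T)).filter (fun e => ¬ e.1 ∈ T), c e := by
    apply Finset.sum_nonneg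
    intro e he
    simp only [Finset.mem_filter] at he
    obtain ⟨⟨_, h2⟩, h1⟩ := he
    by_contra hlt
    push_neg at hlt
    have hpos : 0 < c (e.2, e.1) := by
      have := hanti e.1 e.2
      rw [Prod.mk.eta] at this
      linarith
    have : Relation.ReflTransGen r x e.1 := ((hmem e.2).1 h2).tail hpos
    exact h1 ((hmem e.1).2 this)
  rw [hA, hsplit, hzero] at hB
  linarith

lemma key_lemma {V : Type*} (Γ : SimpleGraph V) (x y : V) (w : V × V → ℝ)
    (hwpos : ∀ e, 0 < w e) (hwsym : ∀ u v : V, w (u, v) = w (v, u)) (B : ℝ)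
    (hB : ∀ (n : ℕ) (p : ℕ → V), p 0 = x → p n = y →
      (∀ i < n, Γ.Adj (p i) (p (i + 1))) →
      B ≤ ∑ i ∈ Finset.range n, w (p i, p (i + 1))) :
    ∀ N : ℕ, ∀ (c : (V × V) →₀ ℝ) (t : ℝ), c.support.card = N → 0 ≤ t →
      (∀ u v : V, c (u, v) = -c (v, u)) →
      (∀ e ∈ c.support, Γ.Adj e.1 e.2) →
      bnd c = t • (Finsupp.single y 1 - Finsupp.single x 1) →
      t * B ≤ (c.sum fun e a => |a| * w e) / 2 := by
  classical
  intro N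
  induction N using Nat.strong_induction_on with
  | _ N ih =>
  intro c t hcard ht hanti hsupp hbnd
  have hsum_nonneg : ∀ c'' : (V × V) →₀ ℝ, 0 ≤ c''.sum fun e a => |a| * w e := by
    intro c''
    apply Finset.sum_nonneg
    intro e _
    exact mul_nonneg (abs_nonneg _) (hwpos e).le
  rcases ht.eq_or_lt with heq | ht
  · rw [← heq, zero_mul]
    exact div_nonneg (hsum_nonneg c) (by norm_num)
  by_cases hxy : x = y
  · have hB0 : B ≤ 0 := by
      have := hB 0 (fun _ => x) rfl hxy (fun i hi => absurd hi (Nat.not_lt_zero i))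
      simpa using this
    calc t * B ≤ 0 := mul_nonpos_of_nonneg_of_nonpos ht.le hB0
    _ ≤ _ := div_nonneg (hsum_nonneg c) (by norm_num)
  -- main case
  obtain ⟨n, p, hp0, hpn, hc, hinj⟩ := exists_inj_chain (reach_of_bnd c hanti ht hbnd)
  have hn : 0 < n := by
    rcases Nat.eq_zero_or_pos n with rfl | h
    · exact absurd (hp0 ▸ hpn) hxy
    · exact h
  have hne : (Finset.range n).Nonempty := ⟨0, Finset.mem_range.2 hn⟩
  set m := (Finset.range n).inf' hne (fun i => c (p i, p (i + 1))) with hm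
  have hm_le : ∀ i < n, m ≤ c (p i, p (i + 1)) :=
    fun i hi => Finset.inf'_le _ (Finset.mem_range.2 hi)
  have hm_pos : 0 < m := by
    obtain ⟨i, hi, hieq⟩ := Finset.exists_mem_eq_inf' hne (fun i => c (p i, p (i + 1)))
    rw [hm, hieq]
    exact hc i (Finset.mem_range.1 hi)
  set s := min m t with hs
  have hs_pos : 0 < s := lt_min hm_pos ht
  have hs_le_m : s ≤ m := min_le_left _ _
  have hs_le_t : s ≤ t := min_le_right _ _
  -- the path chain
  set P : (V × V) →₀ ℝ := ∑ i ∈ Finset.range n,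
      (Finsupp.single (p i, p (i + 1)) 1 - Finsupp.single (p (i + 1), p i) 1) with hP
  have hfwd_ne_rev : ∀ i < n, ∀ j < n, (p i, p (i + 1)) ≠ (p (j + 1), p j) := by
    intro i hi j hj h
    rw [Prod.mk.injEq] at h
    have h1 := hinj i hi.le (j + 1) hj h.1
    have h2 := hinj (i + 1) hi j hj.le h.2
    omega
  have hfwd_inj : ∀ i < n, ∀ j < n, (p i, p (i + 1)) = (p j, p (j + 1)) → i = j := by
    intro i hi j hj h
    rw [Prod.mk.injEq] at h
    exact hinj i hi.le j hj.le h.1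
  have hrev_inj : ∀ i < n, ∀ j < n, (p (i + 1), p i) = (p (j + 1), p j) → i = j := by
    intro i hi j hj h
    rw [Prod.mk.injEq] at h
    exact hinj i hi.le j hj.le h.2
  have hP_apply : ∀ e : V × V, P e = ∑ i ∈ Finset.range n,
      ((Finsupp.single (p i, p (i + 1)) (1:ℝ)) e - (Finsupp.single (p (i + 1), p i) (1:ℝ)) e) := by
    intro e
    rw [hP, Finsupp.finset_sum_apply]
    exact Finset.sum_congr rfl fun i _ => Finsupp.sub_apply _ _ _
  have hPfwd : ∀ i < n, P (p i, p (i + 1)) = 1 := by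
    intro i hi
    rw [hP_apply, Finset.sum_eq_single i]
    · rw [Finsupp.single_apply, if_pos rfl, Finsupp.single_apply,
        if_neg (fun h => hfwd_ne_rev i hi i hi h.symm), sub_zero]
    · intro j hj hji
      rw [Finsupp.single_apply,
        if_neg (fun h => hji (hfwd_inj j (Finset.mem_range.1 hj) i hi h)),
        Finsupp.single_apply,
        if_neg (fun h => hfwd_ne_rev i hi j (Finset.mem_range.1 hj) h.symm)]
      norm_num
    · intro h
      exact absurd (Finset.mem_range.2 hi) h
  have hPrev : ∀ i < n, P (p (i + 1), p i) = -1 := by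
    intro i hi
    rw [hP_apply, Finset.sum_eq_single i]
    · rw [Finsupp.single_apply, if_neg (hfwd_ne_rev i hi i hi),
        Finsupp.single_apply, if_pos rfl]
      ring
    · intro j hj hji
      rw [Finsupp.single_apply, if_neg (hfwd_ne_rev j (Finset.mem_range.1 hj) i hi),
        Finsupp.single_apply,
        if_neg (fun h => hji (hrev_inj j (Finset.mem_range.1 hj) i hi h))]
      norm_num
    · intro h
      exact absurd (Finset.mem_range.2 hi) h
  have hPzero : ∀ e : V × V,
      (∀ i < n, e ≠ (p i, p (i + 1)) ∧ e ≠ (p (i + 1), p i)) → P e = 0 := by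
    intro e he
    rw [hP_apply]
    apply Finset.sum_eq_zero
    intro j hj
    have hj' := Finset.mem_range.1 hj
    rw [Finsupp.single_apply, if_neg (fun h => (he j hj').1 h.symm),
      Finsupp.single_apply, if_neg (fun h => (he j hj').2 h.symm), sub_zero]
  set c' : (V × V) →₀ ℝ := c - s • P with hc'
  have hc'app : ∀ e : V × V, c' e = c e - s * P e := by
    intro e
    rw [hc', Finsupp.sub_apply, Finsupp.smul_apply, smul_eq_mul]
  have hkeyeq : ∀ e : V × V, |c e| = |c' e| + s * |P e| := by
    intro e
    by_cases hfwd : ∃ i, i < n ∧ e = (p i, p (i + 1))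
    · obtain ⟨i, hi, rfl⟩ := hfwd
      rw [hc'app, hPfwd i hi]
      have h1 : m ≤ c (p i, p (i + 1)) := hm_le i hi
      rw [abs_of_nonneg (by linarith), abs_of_nonneg (by linarith), abs_one]
      ring
    · by_cases hrev : ∃ i, i < n ∧ e = (p (i + 1), p i)
      · obtain ⟨i, hi, rfl⟩ := hrev
        rw [hc'app, hPrev i hi]
        have h1 : m ≤ c (p i, p (i + 1)) := hm_le i hi
        have h2 : c (p (i + 1), p i) = -c (p i, p (i + 1)) := hanti _ _
        rw [abs_of_nonpos (by linarith), abs_of_nonpos (by linarith), abs_neg, abs_one]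
        ring
      · push_neg at hfwd hrev
        have hz : P e = 0 := hPzero e (fun i hi => ⟨hfwd i hi, hrev i hi⟩)
        rw [hc'app, hz]
        simp
  have hsupp' : c'.support ⊆ c.support := by
    intro e he
    rw [Finsupp.mem_support_iff] at he ⊢
    intro h
    have := hkeyeq e
    rw [h, abs_zero] at this
    have h1 : 0 ≤ s * |P e| := mul_nonneg hs_pos.le (abs_nonneg _)
    have h2 : 0 ≤ |c' e| := abs_nonneg _
    have : |c' e| = 0 := by linarith
    exact he (abs_eq_zero.1 this)
  have hPanti : ∀ u v : V, P (u, v) = -P (v, u) := by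
    intro u v
    by_cases hfwd : ∃ i, i < n ∧ (u, v) = (p i, p (i + 1))
    · obtain ⟨i, hi, h⟩ := hfwd
      rw [Prod.mk.injEq] at h
      rw [h.1, h.2, hPfwd i hi, hPrev i hi]
      ring
    · by_cases hrev : ∃ i, i < n ∧ (u, v) = (p (i + 1), p i)
      · obtain ⟨i, hi, h⟩ := hrev
        rw [Prod.mk.injEq] at h
        rw [h.1, h.2, hPrev i hi, hPfwd i hi]
      · push_neg at hfwd hrev
        have h1 : P (u, v) = 0 := hPzero _ (fun i hi => ⟨hfwd i hi, hrev i hi⟩)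
        have h2 : P (v, u) = 0 := by
          apply hPzero
          intro i hi
          constructor
          · intro h
            rw [Prod.mk.injEq] at h
            exact hrev i hi (by rw [Prod.mk.injEq]; exact ⟨h.2, h.1⟩)
          · intro h
            rw [Prod.mk.injEq] at h
            exact hfwd i hi (by rw [Prod.mk.injEq]; exact ⟨h.2, h.1⟩)
        rw [h1, h2]
        ring
  have hanti' : ∀ u v : V, c' (u, v) = -c' (v, u) := by
    intro u v
    rw [hc'app, hc'app, hanti u v, hPanti u v]
    ring_nf
  have hfwd_mem : ∀ i < n, (p i, p (i + 1)) ∈ c.support := by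
    intro i hi
    rw [Finsupp.mem_support_iff]
    have := hm_le i hi
    intro h
    rw [h] at this
    linarith
  have hrev_mem : ∀ i < n, (p (i + 1), p i) ∈ c.support := by
    intro i hi
    rw [Finsupp.mem_support_iff]
    have h1 := hm_le i hi
    have h2 : c (p (i + 1), p i) = -c (p i, p (i + 1)) := hanti _ _
    intro h
    rw [h] at h2
    linarith
  have hbndP : bnd P = Finsupp.single y 1 - Finsupp.single x 1 := by
    rw [hP, bnd_finset_sum]
    have : ∀ i ∈ Finset.range n,
        bnd (Finsupp.single (p i, p (i + 1)) (1:ℝ) - Finsupp.single (p (i + 1), p i) 1)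
        = Finsupp.single (p (i + 1)) (1:ℝ) - Finsupp.single (p i) 1 := by
      intro i _
      rw [bnd_sub, bnd_single, bnd_single]
    rw [Finset.sum_congr rfl this, Finset.sum_range_sub (fun i => Finsupp.single (p i) (1:ℝ))]
    rw [hpn, hp0]
  have hbnd' : bnd c' = (t - s) • (Finsupp.single y 1 - Finsupp.single x 1) := by
    rw [hc', bnd_sub, bnd_smul, hbndP, hbnd, sub_smul]
  -- recursive bound
  have hstep : (t - s) * B ≤ (c'.sum fun e a => |a| * w e) / 2 := by
    rcases le_total t m with htm | hmt
    · have hst : s = t := min_eq_right htm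
      rw [hst, sub_self, zero_mul]
      exact div_nonneg (hsum_nonneg c') (by norm_num)
    · have hsm : s = m := min_eq_left hmt
      obtain ⟨i₀, hi₀, hieq⟩ := Finset.exists_mem_eq_inf' hne (fun i => c (p i, p (i + 1)))
      have hi₀' := Finset.mem_range.1 hi₀
      have he₀ : c' (p i₀, p (i₀ + 1)) = 0 := by
        rw [hc'app, hPfwd i₀ hi₀', hsm, ← hieq]
        ring
      have hnm : (p i₀, p (i₀ + 1)) ∉ c'.support := by
        rw [Finsupp.mem_support_iff]
        exact fun h => h he₀
      have hlt : c'.support.card < N := by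
        rw [← hcard]
        apply Finset.card_lt_card
        rw [Finset.ssubset_iff_of_subset hsupp']
        exact ⟨_, hfwd_mem i₀ hi₀', hnm⟩
      exact ih _ hlt c' (t - s) rfl (by linarith) hanti'
        (fun e he => hsupp e (hsupp' he)) hbnd'
  -- sum comparison
  have hsum_c' : (c'.sum fun e a => |a| * w e) = ∑ e ∈ c.support, |c' e| * w e := by
    apply Finsupp.sum_of_support_subset _ hsupp'
    intro e _
    rw [abs_zero, zero_mul]
  have hadjp : ∀ i < n, Γ.Adj (p i) (p (i + 1)) :=
    fun i hi => hsupp _ (hfwd_mem i hi)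
  have hPsum : 2 * B ≤ ∑ e ∈ c.support, |P e| * w e := by
    set F : Finset (V × V) := (Finset.range n).image (fun i => (p i, p (i + 1))) with hF
    set R : Finset (V × V) := (Finset.range n).image (fun i => (p (i + 1), p i)) with hR
    have hFsub : F ⊆ c.support := by
      intro e he
      rw [hF, Finset.mem_image] at he
      obtain ⟨i, hi, rfl⟩ := he
      exact hfwd_mem i (Finset.mem_range.1 hi)
    have hRsub : R ⊆ c.support := by
      intro e he
      rw [hR, Finset.mem_image] at he
      obtain ⟨i, hi, rfl⟩ := he
      exact hrev_mem i (Finset.mem_range.1 hi)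
    have hdisj : Disjoint F R := by
      rw [Finset.disjoint_left]
      intro e heF heR
      rw [hF, Finset.mem_image] at heF
      rw [hR, Finset.mem_image] at heR
      obtain ⟨i, hi, rfl⟩ := heF
      obtain ⟨j, hj, hj'⟩ := heR
      exact hfwd_ne_rev i (Finset.mem_range.1 hi) j (Finset.mem_range.1 hj) hj'.symm
    have hsumF : ∑ e ∈ F, w e = ∑ i ∈ Finset.range n, w (p i, p (i + 1)) := by
      rw [hF, Finset.sum_image]
      intro i hi j hj h
      exact hfwd_inj i (Finset.mem_range.1 hi) j (Finset.mem_range.1 hj) h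
    have hsumR : ∑ e ∈ R, w e = ∑ i ∈ Finset.range n, w (p i, p (i + 1)) := by
      rw [hR, Finset.sum_image]
      · exact Finset.sum_congr rfl fun i _ => hwsym _ _
      · intro i hi j hj h
        exact hrev_inj i (Finset.mem_range.1 hi) j (Finset.mem_range.1 hj) h
    have hBn := hB n p hp0 hpn hadjp
    calc 2 * B = B + B := by ring
    _ ≤ (∑ e ∈ F, w e) + ∑ e ∈ R, w e := by rw [hsumF, hsumR]; linarith
    _ = ∑ e ∈ F ∪ R, w e := (Finset.sum_union hdisj).symm
    _ = ∑ e ∈ F ∪ R, |P e| * w e := by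
        apply Finset.sum_congr rfl
        intro e he
        rw [Finset.mem_union] at he
        rcases he with he | he
        · rw [hF, Finset.mem_image] at he
          obtain ⟨i, hi, rfl⟩ := he
          rw [hPfwd i (Finset.mem_range.1 hi), abs_one, one_mul]
        · rw [hR, Finset.mem_image] at he
          obtain ⟨i, hi, rfl⟩ := he
          rw [hPrev i (Finset.mem_range.1 hi), abs_neg, abs_one, one_mul]
    _ ≤ ∑ e ∈ c.support, |P e| * w e := by
        apply Finset.sum_le_sum_of_subset_of_nonneg
        · rw [Finset.union_subset_iff]
          exact ⟨hFsub, hRsub⟩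
        · intro e _ _
          exact mul_nonneg (abs_nonneg _) (hwpos e).le
  have hfinal : (c.sum fun e a => |a| * w e)
      = (∑ e ∈ c.support, |c' e| * w e) + s * ∑ e ∈ c.support, |P e| * w e := by
    rw [Finset.mul_sum, ← Finset.sum_add_distrib]
    apply Finset.sum_congr rfl
    intro e _
    beta_reduce
    rw [hkeyeq e]
    ring
  have h1 : s * (2 * B) ≤ s * ∑ e ∈ c.support, |P e| * w e :=
    mul_le_mul_of_nonneg_left hPsum hs_pos.le
  rw [hsum_c'] at hstep
  rw [hfinal]
  nlinarith [hstep, h1]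

theorem stmt12 {V : Type*} (Γ : SimpleGraph V) (hconn : Γ.Connected)
    (ε β : ℝ) (hε : 0 < ε) (hβ : 0 < β)
    (hpath : ∀ (x y : V) (n : ℕ) (p : ℕ → V), p 0 = x → p n = y →
      (∀ i < n, Γ.Adj (p i) (p (i + 1))) →
      β * Γ.dist x y ≤
        ∑ i ∈ Finset.range n, Real.exp (-ε * dGeod Γ x y (p i)))
    (x y : V) (c : (V × V) →₀ ℝ)
    (hanti : ∀ u v : V, c (u, v) = -c (v, u))
    (hsupp : ∀ e ∈ c.support, Γ.Adj e.1 e.2)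
    (hbnd : bnd c = Finsupp.single y 1 - Finsupp.single x 1) :
    β * Γ.dist x y ≤
      (c.sum fun e a => |a| *
        Real.exp (-ε * min (dGeod Γ x y e.1) (dGeod Γ x y e.2))) / 2 := by
  classical
  set w : V × V → ℝ :=
    fun e => Real.exp (-ε * min (dGeod Γ x y e.1) (dGeod Γ x y e.2)) with hw
  have hwpos : ∀ e : V × V, 0 < w e := fun e => Real.exp_pos _
  have hwsym : ∀ u v : V, w (u, v) = w (v, u) := by
    intro u v
    simp only [hw]
    rw [min_comm]
  have hB : ∀ (n : ℕ) (p : ℕ → V), p 0 = x → p n = y →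
      (∀ i < n, Γ.Adj (p i) (p (i + 1))) →
      β * Γ.dist x y ≤ ∑ i ∈ Finset.range n, w (p i, p (i + 1)) := by
    intro n p h0 hn hadj
    refine le_trans (hpath x y n p h0 hn hadj) (Finset.sum_le_sum ?_)
    intro i _
    simp only [hw]
    rw [Real.exp_le_exp]
    have hmle : (↑(min (dGeod Γ x y (p i)) (dGeod Γ x y (p (i + 1)))) : ℝ)
        ≤ ↑(dGeod Γ x y (p i)) := by
      exact_mod_cast min_le_left _ _
    exact mul_le_mul_of_nonpos_left hmle (by linarith : -ε ≤ 0)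
  have hkey := key_lemma Γ x y w hwpos hwsym (β * Γ.dist x y) hB c.support.card c 1
    rfl one_pos.le hanti hsupp (by rw [hbnd, one_smul])
  rw [one_mul] at hkey
  exact hkey
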